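/- arXiv:1709.04898 — 6 statements merged into one kernel-verified Lean document; each statement's English description precedes it below -/
import Mathlib

section
/- For d ≥ 2, the optimal average success probability of the 2^d → 1 quantum random access code, namely the maximum over choices of two orthonormal bases {ψ_i}, {φ_j} of ℂ^d of (1/(2d²)) ∑_{i,j} (1 + |⟨ψ_i, φ_j⟩|), equals (1/2)(1 + 1/√d); moreover a pair of bases attains this maximum if and only if the bases are mutually unbiased. -/
open scoped ComplexInnerProductSpace

lemma qrac_row (d : ℕ) (hd : 0 < d) (a : Fin d → ℝ) (ha : ∀ j, 0 ≤ a j)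
    (h2 : ∑ j, a j ^ 2 = 1) :
    ∑ j, a j ≤ Real.sqrt d ∧ (∑ j, a j = Real.sqrt d ↔ ∀ j, a j = 1 / Real.sqrt d) := by
  set s := Real.sqrt d with hs
  have hs0 : 0 < s := Real.sqrt_pos.2 (by exact_mod_cast hd)
  have hssq : s ^ 2 = d := Real.sq_sqrt (by positivity)
  have key : ∑ j, (a j - 1 / s) ^ 2 = 2 - (2 / s) * ∑ j, a j := by
    have : ∀ j, (a j - 1 / s) ^ 2 = a j ^ 2 - (2 / s) * a j + 1 / s ^ 2 := by
      intro j; field_simp; ring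
    rw [Finset.sum_congr rfl fun j _ => this j]
    rw [Finset.sum_add_distrib, Finset.sum_sub_distrib, h2, ← Finset.mul_sum,
      Finset.sum_const, Finset.card_univ, Fintype.card_fin, hssq]
    field_simp
    rw [nsmul_eq_mul, mul_one_div_cancel (by positivity : (d:ℝ) ≠ 0)]; ring
  have hnn : (0:ℝ) ≤ ∑ j, (a j - 1 / s) ^ 2 := Finset.sum_nonneg fun j _ => sq_nonneg _
  constructor
  · have h3 : (2 / s) * ∑ j, a j ≤ 2 := by linarith
    have h4 : 2 * (∑ j, a j) ≤ 2 * s := by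
      calc 2 * (∑ j, a j) = 2 / s * (∑ j, a j) * s := by field_simp
        _ ≤ 2 * s := mul_le_mul_of_nonneg_right h3 hs0.le
    linarith
  · constructor
    · intro h
      have hz : ∑ j, (a j - 1 / s) ^ 2 = 0 := by
        rw [key, h]; field_simp; norm_num
      intro j
      have := (Finset.sum_eq_zero_iff_of_nonneg fun j _ => sq_nonneg (a j - 1/s)).1 hz j
        (Finset.mem_univ j)
      have := pow_eq_zero_iff (n := 2) (by norm_num) |>.1 this
      linarith
    · intro h
      rw [Finset.sum_congr rfl fun j _ => h j, Finset.sum_const, Finset.card_univ,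
        Fintype.card_fin, nsmul_eq_mul]
      field_simp
      nlinarith [hssq]

lemma qrac_parseval (d : ℕ) (ψ φ : OrthonormalBasis (Fin d) ℂ (EuclideanSpace ℂ (Fin d)))
    (i : Fin d) : ∑ j, ‖⟪ψ i, φ j⟫‖ ^ 2 = 1 := by
  have h1 : ‖φ.repr (ψ i)‖ = 1 := by
    rw [LinearIsometryEquiv.norm_map]; exact ψ.orthonormal.1 i
  have h2 : ∑ j, ‖φ.repr (ψ i) j‖ ^ 2 = 1 := by
    have := EuclideanSpace.norm_eq (φ.repr (ψ i))
    rw [h1] at this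
    have h3 : (1:ℝ) = Real.sqrt (∑ j, ‖φ.repr (ψ i) j‖ ^ 2) := this
    nlinarith [Real.sq_sqrt (Finset.sum_nonneg fun j (_ : j ∈ Finset.univ) =>
      sq_nonneg ‖φ.repr (ψ i) j‖), h3]
  calc ∑ j, ‖⟪ψ i, φ j⟫‖ ^ 2 = ∑ j, ‖φ.repr (ψ i) j‖ ^ 2 := by
        refine Finset.sum_congr rfl fun j _ => ?_
        rw [φ.repr_apply_apply, norm_inner_symm]
    _ = 1 := h2


noncomputable def fvec (d : ℕ) (i : Fin d) : EuclideanSpace ℂ (Fin d) :=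
  WithLp.toLp 2 fun k => Complex.exp (2 * Real.pi * Complex.I * (i : ℕ) * (k : ℕ) / d) / (Real.sqrt d : ℝ)

lemma fvec_inner (d : ℕ) (hd : 0 < d) (i j : Fin d) :
    ⟪fvec d i, fvec d j⟫ = if i = j then 1 else 0 := by
  have hd0 : (d : ℂ) ≠ 0 := Nat.cast_ne_zero.2 hd.ne'
  have hsq : ((Real.sqrt d : ℝ) : ℂ) * ((Real.sqrt d : ℝ) : ℂ) = (d : ℂ) := by
    have : Real.sqrt d * Real.sqrt d = (d:ℝ) := Real.mul_self_sqrt (by positivity)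
    exact_mod_cast congrArg (Complex.ofReal) this
  set ζ : ℂ := Complex.exp (2 * Real.pi * Complex.I * (((j:ℕ):ℂ) - ((i:ℕ):ℂ)) / d) with hζ
  have hterm : ∀ k : Fin d, (starRingEnd ℂ) (fvec d i k) * fvec d j k = ζ ^ (k:ℕ) / d := by
    intro k
    simp only [fvec, PiLp.toLp_apply, map_div₀, ← Complex.exp_conj, map_mul, Complex.conj_I,
      Complex.conj_ofReal, map_ofNat, map_natCast]
    rw [div_mul_div_comm, ← Complex.exp_add, hsq, hζ, ← Complex.exp_nat_mul]
    refine congrArg (· / (d:ℂ)) (congrArg Complex.exp ?_)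
    field_simp
    ring
  rw [PiLp.inner_apply]
  have hterm' : ∀ k : Fin d, fvec d j k * (starRingEnd ℂ) (fvec d i k) = ζ ^ (k:ℕ) / d :=
    fun k => by rw [mul_comm]; exact hterm k
  simp only [RCLike.inner_apply, hterm']
  rw [← Finset.sum_div, Fin.sum_univ_eq_sum_range (fun k => ζ ^ k) d]
  by_cases h : i = j
  · subst h
    rw [if_pos rfl]
    have hz1 : ζ = 1 := by simp [hζ]
    simp only [hz1, one_pow, Finset.sum_const, Finset.card_range, nsmul_eq_mul, mul_one]
    exact div_self hd0
  · rw [if_neg h]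
    have hζd : ζ ^ d = 1 := by
      rw [hζ, ← Complex.exp_nat_mul]
      have : (d:ℂ) * (2 * Real.pi * Complex.I * (((j:ℕ):ℂ) - ((i:ℕ):ℂ)) / d)
          = (((j:ℕ):ℤ) - ((i:ℕ):ℤ) : ℤ) * (2 * Real.pi * Complex.I) := by
        push_cast; field_simp
      rw [this, Complex.exp_int_mul_two_pi_mul_I]
    have hζ1 : ζ ≠ 1 := by
      rw [hζ, Ne, Complex.exp_eq_one_iff]
      rintro ⟨n, hn⟩
      have h2πI : (2 * (Real.pi:ℂ) * Complex.I) ≠ 0 := by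
        simp [Real.pi_ne_zero, Complex.I_ne_zero, Complex.ofReal_ne_zero]
      have hC : ((j:ℕ):ℂ) - ((i:ℕ):ℂ) = (n : ℂ) * d := by
        have h2 : 2 * (Real.pi:ℂ) * Complex.I * (((j:ℕ):ℂ) - ((i:ℕ):ℂ))
            = 2 * Real.pi * Complex.I * ((n:ℂ) * d) := by
          field_simp at hn
          linear_combination 2 * (Real.pi:ℂ) * Complex.I * hn
        exact mul_left_cancel₀ h2πI h2
      have hZ : ((j:ℕ):ℤ) - ((i:ℕ):ℤ) = n * d := by exact_mod_cast hC
      have hne : ((j:ℕ):ℤ) - ((i:ℕ):ℤ) ≠ 0 := by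
        simp only [sub_ne_zero]
        exact_mod_cast fun hh => h (Fin.ext (by omega)).symm
      have hi : ((i:ℕ):ℤ) < d := by exact_mod_cast i.isLt
      have hj : ((j:ℕ):ℤ) < d := by exact_mod_cast j.isLt
      have hlt : |((j:ℕ):ℤ) - ((i:ℕ):ℤ)| < d := by
        rw [abs_lt]
        constructor <;> [nlinarith [Int.natCast_nonneg (j:ℕ)]; nlinarith [Int.natCast_nonneg (i:ℕ)]]
      have hdvd : (d:ℤ) ∣ ((j:ℕ):ℤ) - ((i:ℕ):ℤ) := ⟨n, by linarith [hZ, mul_comm n (d:ℤ)]⟩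
      have := Int.le_of_dvd (abs_pos.2 hne) ((dvd_abs _ _).2 hdvd)
      omega
    rw [geom_sum_eq hζ1, hζd]
    simp

lemma qrac_exists (d : ℕ) (hd : 0 < d) :
    ∃ ψ φ : OrthonormalBasis (Fin d) ℂ (EuclideanSpace ℂ (Fin d)),
      ∀ i j : Fin d, ‖⟪ψ i, φ j⟫‖ ^ 2 = 1 / (d:ℝ) := by
  have hdR : (0:ℝ) < d := by exact_mod_cast hd
  haveI : Nonempty (Fin d) := ⟨⟨0, hd⟩⟩
  have horth : Orthonormal ℂ (fvec d) := orthonormal_iff_ite.2 (fvec_inner d hd)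
  have hcard : Fintype.card (Fin d) = Module.finrank ℂ (EuclideanSpace ℂ (Fin d)) := by
    simp
  let b := basisOfOrthonormalOfCardEqFinrank horth hcard
  have hb : ⇑b = fvec d := coe_basisOfOrthonormalOfCardEqFinrank _ _
  refine ⟨EuclideanSpace.basisFun (Fin d) ℂ,
    b.toOrthonormalBasis (by rwa [hb]), fun i j => ?_⟩
  have hφ : ⇑(b.toOrthonormalBasis (by rwa [hb])) = fvec d := by
    rw [Module.Basis.coe_toOrthonormalBasis, hb]
  rw [hφ]
  have : ⟪(EuclideanSpace.basisFun (Fin d) ℂ) i, fvec d j⟫ = fvec d j i := by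
    rw [EuclideanSpace.basisFun_apply, EuclideanSpace.inner_single_left]
    simp
  rw [this]
  have hnorm : ‖fvec d j i‖ = 1 / Real.sqrt d := by
    unfold fvec
    rw [PiLp.toLp_apply, norm_div]
    have harg : 2 * (Real.pi:ℂ) * Complex.I * (j : ℕ) * (i : ℕ) / d
        = ((2 * Real.pi * (j:ℕ) * (i:ℕ) / d : ℝ) : ℂ) * Complex.I := by
      push_cast; ring
    rw [harg, Complex.norm_exp_ofReal_mul_I]
    simp [Real.sqrt_nonneg]
  rw [hnorm, div_pow, one_pow, Real.sq_sqrt hdR.le]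

lemma qrac_main (d : ℕ) (hd : 0 < d)
    (ψ φ : OrthonormalBasis (Fin d) ℂ (EuclideanSpace ℂ (Fin d))) :
    (1 / (2 * (d:ℝ) ^ 2)) * (∑ i : Fin d, ∑ j : Fin d, (1 + ‖⟪ψ i, φ j⟫‖)) ≤
        (1 / 2) * (1 + 1 / Real.sqrt d) ∧
    ((1 / (2 * (d:ℝ) ^ 2)) * (∑ i : Fin d, ∑ j : Fin d, (1 + ‖⟪ψ i, φ j⟫‖)) =
        (1 / 2) * (1 + 1 / Real.sqrt d) ↔
      ∀ i j : Fin d, ‖⟪ψ i, φ j⟫‖ ^ 2 = 1 / d) := by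
  have hdR : (0:ℝ) < d := by exact_mod_cast hd
  set s := Real.sqrt d with hs
  have hs0 : 0 < s := Real.sqrt_pos.2 hdR
  have hssq : s ^ 2 = d := Real.sq_sqrt hdR.le
  set A : Fin d → Fin d → ℝ := fun i j => ‖⟪ψ i, φ j⟫‖ with hA
  have hrow : ∀ i, ∑ j, A i j ≤ s ∧ (∑ j, A i j = s ↔ ∀ j, A i j = 1 / s) :=
    fun i => qrac_row d hd (A i) (fun j => norm_nonneg _) (qrac_parseval d ψ φ i)
  have hT : ∑ i : Fin d, ∑ j : Fin d, (1 + A i j)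
      = (d:ℝ)^2 + ∑ i : Fin d, ∑ j : Fin d, A i j := by
    simp [Finset.sum_add_distrib]
    ring
  have hsum_le : ∑ i : Fin d, ∑ j : Fin d, A i j ≤ (d:ℝ) * s := by
    calc ∑ i : Fin d, ∑ j : Fin d, A i j ≤ ∑ _i : Fin d, s :=
          Finset.sum_le_sum fun i _ => (hrow i).1
      _ = (d:ℝ) * s := by simp [mul_comm]
  have hbound_eq : (1 / (2 * (d:ℝ) ^ 2)) * ((d:ℝ)^2 + (d:ℝ) * s)
      = (1 / 2) * (1 + 1 / s) := by
    have : (d:ℝ) * s * s = (d:ℝ) * d := by nlinarith [hssq]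
    field_simp
    nlinarith [this]
  have hpos : (0:ℝ) < 2 * (d:ℝ)^2 := by positivity
  constructor
  · rw [hT]
    calc (1 / (2 * (d:ℝ) ^ 2)) * ((d:ℝ)^2 + ∑ i : Fin d, ∑ j : Fin d, A i j)
        ≤ (1 / (2 * (d:ℝ) ^ 2)) * ((d:ℝ)^2 + (d:ℝ) * s) := by
          apply mul_le_mul_of_nonneg_left (by linarith [hsum_le]) (by positivity)
      _ = (1 / 2) * (1 + 1 / s) := hbound_eq
  · rw [hT]
    constructor
    · intro h
      have hsum_eq : ∑ i : Fin d, ∑ j : Fin d, A i j = (d:ℝ) * s := by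
        rw [← hbound_eq] at h
        have := mul_left_cancel₀ (a := 1 / (2 * (d:ℝ)^2)) (by positivity) h
        linarith
      have hrows : ∀ i : Fin d, ∑ j, A i j = s := by
        have hc : ∑ i : Fin d, (s : ℝ) = (d:ℝ) * s := by simp [mul_comm]
        have := (Finset.sum_eq_sum_iff_of_le (fun i _ => (hrow i).1)).1
          (by rw [hsum_eq, ← hc])
        exact fun i => this i (Finset.mem_univ i)
      intro i j
      have hAij : ‖⟪ψ i, φ j⟫‖ = 1 / s := ((hrow i).2.1 (hrows i)) j
      rw [hAij, div_pow, one_pow, hssq]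
    · intro h
      have hAij : ∀ i j, A i j = 1 / s := by
        intro i j
        have h1 : A i j ^ 2 = (1/s)^2 := by
          show ‖⟪ψ i, φ j⟫‖ ^ 2 = (1/s)^2
          rw [h i j, div_pow, one_pow, hssq]
        have h2 : (A i j - 1/s) * (A i j + 1/s) = 0 := by linear_combination h1
        rcases mul_eq_zero.1 h2 with h3 | h3
        · linarith
        · exfalso
          have : 0 ≤ A i j := norm_nonneg _
          have : 0 < 1/s := by positivity
          linarith
      have : ∑ i : Fin d, ∑ j : Fin d, A i j = (d:ℝ) * s := by
        rw [Finset.sum_congr rfl (fun i _ => Finset.sum_congr rfl fun j _ => hAij i j)]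
        simp only [Finset.sum_const, Finset.card_univ, Fintype.card_fin, nsmul_eq_mul]
        field_simp
        nlinarith [hssq]
      rw [this, hbound_eq]


open scoped ComplexInnerProductSpace in
theorem qrac_2d_optimal (d : ℕ) (hd : 2 ≤ d) :
    IsGreatest
      {p : ℝ | ∃ ψ φ : OrthonormalBasis (Fin d) ℂ (EuclideanSpace ℂ (Fin d)),
        p = (1 / (2 * d ^ 2)) * ∑ i : Fin d, ∑ j : Fin d, (1 + ‖⟪ψ i, φ j⟫‖)}
      ((1 / 2) * (1 + 1 / Real.sqrt d)) ∧
    ∀ ψ φ : OrthonormalBasis (Fin d) ℂ (EuclideanSpace ℂ (Fin d)),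
      (1 / (2 * d ^ 2)) * (∑ i : Fin d, ∑ j : Fin d, (1 + ‖⟪ψ i, φ j⟫‖)) =
        (1 / 2) * (1 + 1 / Real.sqrt d) ↔
      ∀ i j : Fin d, ‖⟪ψ i, φ j⟫‖ ^ 2 = 1 / d := by
  have hd0 : 0 < d := by omega
  constructor
  · constructor
    · obtain ⟨ψ, φ, h⟩ := qrac_exists d hd0
      exact ⟨ψ, φ, ((qrac_main d hd0 ψ φ).2.mpr h).symm⟩
    · rintro p ⟨ψ, φ, rfl⟩
      exact (qrac_main d hd0 ψ φ).1
  · exact fun ψ φ => (qrac_main d hd0 ψ φ).2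
end

section
/- Let {ψ_i}, {φ_j} be orthonormal bases of ℂ^d and define D² = 1 − (1/(d−1)) ∑_{i,j} (|⟨ψ_i, φ_j⟩|² − 1/d)². Then 0 ≤ D² ≤ 1, D² = 1 if and only if the bases are mutually unbiased, and D² is symmetric in the two bases. -/
open scoped ComplexInnerProductSpace

lemma parseval_aux {d : ℕ} (b : OrthonormalBasis (Fin d) ℂ (EuclideanSpace ℂ (Fin d)))
    (x : EuclideanSpace ℂ (Fin d)) (hx : ‖x‖ = 1) :
    ∑ j : Fin d, ‖⟪b j, x⟫‖ ^ 2 = 1 := by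
  have h := b.sum_inner_mul_inner x x
  have h2 : ∀ j, ⟪x, b j⟫ * ⟪b j, x⟫ = ((‖⟪b j, x⟫‖ ^ 2 : ℝ) : ℂ) := by
    intro j
    rw [← inner_conj_symm x (b j), RCLike.conj_mul]
    norm_cast
  rw [Finset.sum_congr rfl (fun j _ => h2 j), inner_self_eq_norm_sq_to_K, hx] at h
  have h' : ((∑ j : Fin d, ‖⟪b j, x⟫‖ ^ 2 : ℝ) : ℂ) = ((1 : ℝ) : ℂ) := by
    rw [Complex.ofReal_sum]
    simpa using h
  exact_mod_cast h'

open scoped ComplexInnerProductSpace in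
theorem distance_measure_properties (d : ℕ) (hd : 2 ≤ d)
    (D2 : OrthonormalBasis (Fin d) ℂ (EuclideanSpace ℂ (Fin d)) →
          OrthonormalBasis (Fin d) ℂ (EuclideanSpace ℂ (Fin d)) → ℝ)
    (hD2 : ∀ ψ φ, D2 ψ φ =
      1 - (1 / (d - 1 : ℝ)) * ∑ i : Fin d, ∑ j : Fin d, (‖⟪ψ i, φ j⟫‖ ^ 2 - 1 / d) ^ 2) :
    ∀ ψ φ : OrthonormalBasis (Fin d) ℂ (EuclideanSpace ℂ (Fin d)),
      (0 ≤ D2 ψ φ) ∧ (D2 ψ φ ≤ 1) ∧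
      (D2 ψ φ = 1 ↔ ∀ i j : Fin d, ‖⟪ψ i, φ j⟫‖ ^ 2 = 1 / d) ∧
      D2 ψ φ = D2 φ ψ := by
  intro ψ φ
  have hd1 : (0 : ℝ) < (d : ℝ) - 1 := by
    have : (2 : ℝ) ≤ d := by exact_mod_cast hd
    linarith
  set x : Fin d → Fin d → ℝ := fun i j => ‖⟪ψ i, φ j⟫‖ ^ 2 with hxdef
  have hx0 : ∀ i j, 0 ≤ x i j := fun i j => sq_nonneg _
  have hx1 : ∀ i j, x i j ≤ 1 := by
    intro i j
    have h1 : ‖⟪ψ i, φ j⟫‖ ≤ ‖ψ i‖ * ‖φ j‖ := norm_inner_le_norm _ _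
    rw [ψ.orthonormal.1 i, φ.orthonormal.1 j, mul_one] at h1
    calc x i j ≤ 1 ^ 2 := by
          exact pow_le_pow_left₀ (norm_nonneg _) h1 2
      _ = 1 := one_pow 2
  have hrow : ∀ i, ∑ j, x i j = 1 := by
    intro i
    simp only [hxdef]
    calc ∑ j, ‖⟪ψ i, φ j⟫‖ ^ 2 = ∑ j, ‖⟪φ j, ψ i⟫‖ ^ 2 :=
          Finset.sum_congr rfl fun j _ => by rw [norm_inner_symm]
      _ = 1 := parseval_aux φ (ψ i) (ψ.orthonormal.1 i)
  have hsum : ∑ i, ∑ j, x i j = (d : ℝ) := by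
    simp [hrow]
  set S : ℝ := ∑ i : Fin d, ∑ j : Fin d, (x i j - 1 / d) ^ 2 with hSdef
  have hS0 : 0 ≤ S := Finset.sum_nonneg fun i _ => Finset.sum_nonneg fun j _ => sq_nonneg _
  have hdpos : (0 : ℝ) < d := by linarith
  have hSle : S ≤ (d : ℝ) - 1 := by
    have hexp : S = (∑ i, ∑ j, (x i j) ^ 2) - 1 := by
      rw [hSdef]
      have : ∀ i j, (x i j - 1 / d) ^ 2 = (x i j) ^ 2 - (2 / d) * x i j + 1 / d ^ 2 := by
        intro i j; ring
      simp only [this, Finset.sum_add_distrib, Finset.sum_sub_distrib, ← Finset.mul_sum]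
      rw [hsum]
      simp only [Finset.sum_const, Finset.card_univ, Fintype.card_fin, nsmul_eq_mul]
      field_simp
      ring
    have hsq : ∑ i, ∑ j, (x i j) ^ 2 ≤ ∑ i, ∑ j, x i j := by
      apply Finset.sum_le_sum; intro i _
      apply Finset.sum_le_sum; intro j _
      calc (x i j) ^ 2 = x i j * x i j := sq (x i j)
        _ ≤ 1 * x i j := mul_le_mul_of_nonneg_right (hx1 i j) (hx0 i j)
        _ = x i j := one_mul _
    rw [hexp]
    rw [hsum] at hsq
    linarith
  have hval : D2 ψ φ = 1 - (1 / ((d : ℝ) - 1)) * S := hD2 ψ φ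
  refine ⟨?_, ?_, ?_, ?_⟩
  · rw [hval]
    have : (1 / ((d : ℝ) - 1)) * S ≤ (1 / ((d : ℝ) - 1)) * ((d : ℝ) - 1) :=
      mul_le_mul_of_nonneg_left hSle (by positivity)
    rw [one_div_mul_cancel (ne_of_gt hd1)] at this
    linarith
  · rw [hval]
    have : 0 ≤ (1 / ((d : ℝ) - 1)) * S := by positivity
    linarith
  · rw [hval]
    constructor
    · intro h
      have hSz : S = 0 := by
        have h1 : (1 / ((d : ℝ) - 1)) * S = 0 := by linarith
        rcases mul_eq_zero.1 h1 with h2 | h2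
        · exact absurd h2 (by positivity)
        · exact h2
      intro i j
      have := (Finset.sum_eq_zero_iff_of_nonneg
        (fun i _ => Finset.sum_nonneg fun j _ => sq_nonneg _)).1 hSz.symm.symm i
        (Finset.mem_univ i)
      have := (Finset.sum_eq_zero_iff_of_nonneg (fun j _ => sq_nonneg _)).1 this j
        (Finset.mem_univ j)
      have hz : x i j - 1 / d = 0 := by
        exact pow_eq_zero_iff two_ne_zero |>.1 this
      have : x i j = 1 / d := by linarith
      exact this
    · intro h
      have hSz : S = 0 := by
        rw [hSdef]
        apply Finset.sum_eq_zero; intro i _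
        apply Finset.sum_eq_zero; intro j _
        rw [show x i j = 1 / (d : ℝ) from h i j]
        ring
      rw [hSz]; ring
  · rw [hD2 ψ φ, hD2 φ ψ]
    congr 1
    congr 1
    rw [Finset.sum_comm]
    apply Finset.sum_congr rfl; intro j _
    apply Finset.sum_congr rfl; intro i _
    rw [norm_inner_symm]
end

section
/- Let {ψ_i}, {φ_j} be orthonormal bases of ℂ^d. The distance measure D² = 1 − (1/(d−1)) ∑_{i,j} (|⟨ψ_i, φ_j⟩|² − 1/d)² equals 0 if and only if the two bases coincide up to a permutation and phases, i.e. there is a permutation σ of {1,...,d} with |⟨ψ_i, φ_{σ(i)}⟩| = 1 for all i. -/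
open scoped ComplexInnerProductSpace

lemma row_sum_aux {d : ℕ} (b : OrthonormalBasis (Fin d) ℂ (EuclideanSpace ℂ (Fin d)))
    (x : EuclideanSpace ℂ (Fin d)) (hx : ‖x‖ = 1) :
    ∑ j : Fin d, ‖⟪x, b j⟫‖ ^ 2 = 1 := by
  have h := b.sum_inner_mul_inner x x
  have h2 : ∀ j : Fin d, ⟪x, b j⟫ * ⟪b j, x⟫ = ((‖⟪x, b j⟫‖ ^ 2 : ℝ) : ℂ) := by
    intro j
    rw [← inner_conj_symm x (b j), RCLike.conj_mul, RCLike.norm_conj]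
    norm_cast
  rw [Finset.sum_congr rfl (fun j _ => h2 j)] at h
  rw [← Complex.ofReal_sum, inner_self_eq_norm_sq_to_K, hx] at h
  norm_num at h
  exact_mod_cast h

open scoped ComplexInnerProductSpace in
theorem distance_measure_zero_iff (d : ℕ) (hd : 2 ≤ d)
    (ψ φ : OrthonormalBasis (Fin d) ℂ (EuclideanSpace ℂ (Fin d))) :
    1 - (1 / (d - 1 : ℝ)) * (∑ i : Fin d, ∑ j : Fin d, (‖⟪ψ i, φ j⟫‖ ^ 2 - 1 / d) ^ 2) = 0 ↔
    ∃ σ : Equiv.Perm (Fin d), ∀ i : Fin d, ‖⟪ψ i, φ (σ i)⟫‖ = 1 := by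
  classical
  have hd2 : (2 : ℝ) ≤ (d : ℝ) := by exact_mod_cast hd
  have hd0 : (d : ℝ) ≠ 0 := by linarith
  have hd1 : (d : ℝ) - 1 ≠ 0 := by linarith
  set P : Fin d → Fin d → ℝ := fun i j => ‖⟪ψ i, φ j⟫‖ ^ 2 with hPdef
  have hPnn : ∀ i j, 0 ≤ P i j := fun i j => by positivity
  have hrow : ∀ i, ∑ j, P i j = 1 := fun i => row_sum_aux φ (ψ i) (ψ.orthonormal.1 i)
  have hcol : ∀ j, ∑ i, P i j = 1 := by
    intro j
    have h := row_sum_aux ψ (φ j) (φ.orthonormal.1 j)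
    rw [← h]
    exact Finset.sum_congr rfl fun i _ => by
      rw [show P i j = ‖⟪ψ i, φ j⟫‖ ^ 2 from rfl, norm_inner_symm]
  -- per-row sum of squares
  have hrowsq : ∀ i, ∑ j, (P i j - 1/(d:ℝ))^2 = (∑ j, P i j ^ 2) - 1/(d:ℝ) := by
    intro i
    have expand : ∀ j : Fin d, (P i j - 1/(d:ℝ))^2
        = P i j ^ 2 - (2/(d:ℝ)) * P i j + 1/(d:ℝ)^2 := fun j => by ring
    rw [Finset.sum_congr rfl fun j _ => expand j, Finset.sum_add_distrib,
      Finset.sum_sub_distrib, ← Finset.mul_sum, hrow i, Finset.sum_const,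
      Finset.card_univ, Fintype.card_fin, nsmul_eq_mul]
    field_simp
    ring
  set T : ℝ := ∑ i : Fin d, ∑ j : Fin d, (P i j - P i j ^ 2) with hT
  have hsumP : ∑ i : Fin d, ∑ j : Fin d, P i j = d := by
    rw [Finset.sum_congr rfl fun i _ => hrow i, Finset.sum_const, Finset.card_univ,
      Fintype.card_fin, nsmul_eq_mul, mul_one]
  have hsplit : T = (d:ℝ) - ∑ i : Fin d, ∑ j : Fin d, P i j ^ 2 := by
    rw [hT, ← hsumP, ← Finset.sum_sub_distrib]
    exact Finset.sum_congr rfl fun i _ => Finset.sum_sub_distrib _ _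
  have hSval : ∑ i : Fin d, ∑ j : Fin d, (P i j - 1/(d:ℝ))^2 = ((d:ℝ) - 1) - T := by
    rw [Finset.sum_congr rfl fun i _ => hrowsq i, Finset.sum_sub_distrib, Finset.sum_const,
      Finset.card_univ, Fintype.card_fin, nsmul_eq_mul, hsplit]
    field_simp
    ring
  have key : (1 - (1 / ((d:ℝ) - 1)) * (∑ i : Fin d, ∑ j : Fin d, (P i j - 1/(d:ℝ))^2) = 0)
      ↔ T = 0 := by
    rw [hSval]
    constructor
    · intro h
      field_simp at h
      linarith
    · intro h
      rw [h]
      field_simp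
      ring
  have hTnn : ∀ i j, 0 ≤ P i j - P i j ^ 2 := by
    intro i j
    have hle : P i j ≤ 1 := by
      rw [← hrow i]
      exact Finset.single_le_sum (fun k _ => hPnn i k) (Finset.mem_univ j)
    nlinarith [hPnn i j]
  have hT0 : T = 0 ↔ ∀ i j, P i j - P i j ^ 2 = 0 := by
    rw [hT]
    constructor
    · intro h i j
      have h1 := (Finset.sum_eq_zero_iff_of_nonneg
        (fun i _ => Finset.sum_nonneg fun j _ => hTnn i j)).mp h i (Finset.mem_univ i)
      exact (Finset.sum_eq_zero_iff_of_nonneg (fun j _ => hTnn i j)).mp h1 j (Finset.mem_univ j)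
    · intro h
      exact Finset.sum_eq_zero fun i _ => Finset.sum_eq_zero fun j _ => h i j
  rw [show (1 - (1 / ((d:ℝ) - 1)) * (∑ i : Fin d, ∑ j : Fin d, (‖⟪ψ i, φ j⟫‖ ^ 2 - 1/(d:ℝ))^2) = 0)
    = (1 - (1 / ((d:ℝ) - 1)) * (∑ i : Fin d, ∑ j : Fin d, (P i j - 1/(d:ℝ))^2) = 0) from rfl,
    key, hT0]
  constructor
  · intro h
    -- each P i j is 0 or 1
    have h01 : ∀ i j, P i j = 0 ∨ P i j = 1 := by
      intro i j
      have := h i j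
      rcases mul_eq_zero.mp (show P i j * (1 - P i j) = 0 by nlinarith) with h' | h'
      · exact Or.inl h'
      · exact Or.inr (by linarith)
    have hex : ∀ i, ∃ j, P i j = 1 := by
      intro i
      by_contra hc
      push_neg at hc
      have : ∑ j, P i j = 0 := Finset.sum_eq_zero fun j _ => by
        rcases h01 i j with h' | h'
        · exact h'
        · exact absurd h' (hc j)
      rw [hrow i] at this
      norm_num at this
    choose f hf using hex
    have hinj : Function.Injective f := by
      intro i₁ i₂ heq
      by_contra hne
      have hsub : ({i₁, i₂} : Finset (Fin d)) ⊆ Finset.univ := Finset.subset_univ _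
      have hle := Finset.sum_le_sum_of_subset_of_nonneg hsub
        (fun k _ _ => hPnn k (f i₁))
      rw [Finset.sum_pair hne, hf i₁] at hle
      have : P i₂ (f i₁) = 1 := by rw [heq]; exact hf i₂
      rw [this, hcol (f i₁)] at hle
      norm_num at hle
    refine ⟨Equiv.ofBijective f (Finite.injective_iff_bijective.mp hinj), fun i => ?_⟩
    have h1 : P i (f i) = 1 := hf i
    have : ‖⟪ψ i, φ (f i)⟫‖ ^ 2 = 1 := h1
    rw [show (Equiv.ofBijective f (Finite.injective_iff_bijective.mp hinj)) i = f i from rfl,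
      ← Real.sqrt_sq (norm_nonneg _), this, Real.sqrt_one]
  · rintro ⟨σ, hσ⟩
    have hval : ∀ i j, P i j = if j = σ i then 1 else 0 := by
      intro i j
      have h1 : P i (σ i) = 1 := by
        show ‖⟪ψ i, φ (σ i)⟫‖ ^ 2 = 1
        rw [hσ i]; norm_num
      by_cases hj : j = σ i
      · rw [hj, h1, if_pos rfl]
      · have hsum := hrow i
        rw [← Finset.add_sum_erase _ _ (Finset.mem_univ (σ i)), h1] at hsum
        have hz : ∑ k ∈ Finset.univ.erase (σ i), P i k = 0 := by linarith
        have := (Finset.sum_eq_zero_iff_of_nonneg (fun k _ => hPnn i k)).mp hz j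
          (Finset.mem_erase.mpr ⟨hj, Finset.mem_univ j⟩)
        rw [this, if_neg hj]
    intro i j
    rw [hval i j]
    by_cases hj : j = σ i <;> simp [hj]
end

section
/- The optimal average success probability of the (n,2)^d → 1 promise-QRAC satisfies P̃_q(n,2,d) ≤ (1/2)(1 + 1/√d), and equality holds if and only if there exist n orthonormal bases of ℂ^d that are pairwise mutually unbiased. -/
open scoped ComplexInnerProductSpace

set_option maxHeartbeats 1000000 in
lemma parseval' (d : ℕ) (ψ : OrthonormalBasis (Fin d) ℂ (EuclideanSpace ℂ (Fin d)))
    (x : EuclideanSpace ℂ (Fin d)) : ∑ i, ‖⟪ψ i, x⟫‖ ^ 2 = ‖x‖ ^ 2 := by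
  have h := ψ.repr.norm_map x
  rw [EuclideanSpace.norm_eq] at h
  have h2 : ∑ i, ‖ψ.repr x i‖ ^ 2 = ‖x‖ ^ 2 := by
    rw [← h, Real.sq_sqrt (Finset.sum_nonneg fun i _ => sq_nonneg _)]
  simpa [ψ.repr_apply_apply] using h2

set_option maxHeartbeats 1000000 in
lemma pair_T (d : ℕ) (hd : 0 < d)
    (ψ φ : OrthonormalBasis (Fin d) ℂ (EuclideanSpace ℂ (Fin d))) :
    (∑ i : Fin d, ∑ j : Fin d, ‖⟪ψ i, φ j⟫‖) ≤ d * Real.sqrt d ∧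
    ((∑ i : Fin d, ∑ j : Fin d, ‖⟪ψ i, φ j⟫‖) = d * Real.sqrt d ↔
      ∀ i j : Fin d, ‖⟪ψ i, φ j⟫‖ ^ 2 = 1 / d) := by
  have hD : (0:ℝ) < d := by exact_mod_cast hd
  set s := Real.sqrt d with hs_def
  have hs : 0 < s := Real.sqrt_pos.mpr hD
  have hss : s ^ 2 = d := Real.sq_sqrt hD.le
  have hsum2 : ∑ i : Fin d, ∑ j : Fin d, ‖⟪ψ i, φ j⟫‖ ^ 2 = d := by
    rw [Finset.sum_comm]
    have h1 : ∀ j : Fin d, ∑ i : Fin d, ‖⟪ψ i, φ j⟫‖ ^ 2 = 1 := by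
      intro j
      rw [parseval' d ψ (φ j), φ.orthonormal.1 j, one_pow]
    simp only [h1, Finset.sum_const, Finset.card_univ, Fintype.card_fin, nsmul_eq_mul, mul_one]
  set T := ∑ i : Fin d, ∑ j : Fin d, ‖⟪ψ i, φ j⟫‖ with hT_def
  have hQ : ∑ i : Fin d, ∑ j : Fin d, (‖⟪ψ i, φ j⟫‖ - 1/s) ^ 2
      = 2 * (d:ℝ) - (2/s) * T := by
    have e : ∀ i j : Fin d, (‖⟪ψ i, φ j⟫‖ - 1/s) ^ 2
        = ‖⟪ψ i, φ j⟫‖ ^ 2 - (2/s) * ‖⟪ψ i, φ j⟫‖ + 1/(d:ℝ) := by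
      intro i j
      have h1 : (1/s) ^ 2 = 1/(d:ℝ) := by rw [div_pow, one_pow, hss]
      rw [sub_sq, ← h1]; ring
    simp_rw [e]
    simp only [Finset.sum_add_distrib, Finset.sum_sub_distrib, Finset.sum_const,
      Finset.card_univ, Fintype.card_fin, nsmul_eq_mul, ← Finset.mul_sum]
    rw [hsum2, ← hT_def]
    field_simp
    ring
  have hQnn : 0 ≤ ∑ i : Fin d, ∑ j : Fin d, (‖⟪ψ i, φ j⟫‖ - 1/s) ^ 2 :=
    Finset.sum_nonneg fun i _ => Finset.sum_nonneg fun j _ => sq_nonneg _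
  constructor
  · have h4 : (2/s) * T ≤ 2 * (d:ℝ) := by linarith [hQnn, hQ]
    have h5 : T = (s/2) * ((2/s) * T) := by field_simp
    rw [h5]
    calc (s/2) * ((2/s) * T) ≤ (s/2) * (2 * d) :=
          mul_le_mul_of_nonneg_left h4 (by positivity)
      _ = d * s := by ring
  constructor
  · intro hTeq
    have hQ0 : ∑ i : Fin d, ∑ j : Fin d, (‖⟪ψ i, φ j⟫‖ - 1/s) ^ 2 = 0 := by
      rw [hQ, hTeq]; field_simp; nlinarith [hss]
    intro i j
    have h1 : ∀ i ∈ Finset.univ, ∑ j : Fin d, (‖⟪ψ i, φ j⟫‖ - 1/s) ^ 2 = 0 :=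
      (Finset.sum_eq_zero_iff_of_nonneg fun i _ =>
        Finset.sum_nonneg fun j _ => sq_nonneg _).mp hQ0
    have h2 : (‖⟪ψ i, φ j⟫‖ - 1/s) ^ 2 = 0 :=
      (Finset.sum_eq_zero_iff_of_nonneg fun j _ => sq_nonneg _).mp
        (h1 i (Finset.mem_univ i)) j (Finset.mem_univ j)
    have h3 : ‖⟪ψ i, φ j⟫‖ = 1/s := by
      have := pow_eq_zero_iff (n := 2) (by norm_num) |>.mp h2
      linarith [this]
    rw [h3, div_pow, one_pow, hss]
  · intro hmub
    have hx : ∀ i j : Fin d, ‖⟪ψ i, φ j⟫‖ = 1/s := by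
      intro i j
      have h1 := hmub i j
      have h2 : (1/s) ^ 2 = 1/(d:ℝ) := by rw [div_pow, one_pow, hss]
      have h3 : ‖⟪ψ i, φ j⟫‖ = Real.sqrt (1/(d:ℝ)) := by
        rw [← h1, Real.sqrt_sq (norm_nonneg _)]
      rw [h3, one_div, one_div, Real.sqrt_inv]
    rw [hT_def]
    simp only [hx, Finset.sum_const, Finset.card_univ, Fintype.card_fin, nsmul_eq_mul]
    field_simp
    nlinarith [hss]

lemma card_lt_pairs (n : ℕ) :
    (Finset.univ.filter fun p : Fin n × Fin n => p.1 < p.2).card = n.choose 2 := by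
  rw [Finset.card_filter, Fintype.sum_prod_type_right]
  have h3 : ∀ j : Fin n, (∑ i : Fin n, if i < j then 1 else 0) = (j : ℕ) := by
    intro j
    rw [← Finset.card_filter]
    simp [Finset.filter_gt_eq_Iio]
  simp_rw [h3]
  have h1 := Finset.sum_range_id_mul_two n
  have h2 : ∑ j : Fin n, (j : ℕ) = ∑ i ∈ Finset.range n, i :=
    Fin.sum_univ_eq_sum_range (fun i => i) n
  rw [h2, Nat.choose_two_right]
  omega

set_option maxHeartbeats 1000000 in
open scoped ComplexInnerProductSpace in
theorem pqrac_bound_and_mub_iff (n d : ℕ) (hn : 2 ≤ n) (hd : 2 ≤ d)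
    (P : (Fin n → OrthonormalBasis (Fin d) ℂ (EuclideanSpace ℂ (Fin d))) → ℝ)
    (hP : ∀ B, P B = (1 / (n.choose 2 : ℝ)) *
      ∑ p ∈ Finset.univ.filter (fun p : Fin n × Fin n => p.1 < p.2),
        (1 / (2 * d ^ 2 : ℝ)) * ∑ i : Fin d, ∑ j : Fin d, (1 + ‖⟪B p.1 i, B p.2 j⟫‖)) :
    (∀ B, P B ≤ (1 / 2) * (1 + 1 / Real.sqrt d)) ∧
    ((∃ B, P B = (1 / 2) * (1 + 1 / Real.sqrt d)) ↔
      ∃ B : Fin n → OrthonormalBasis (Fin d) ℂ (EuclideanSpace ℂ (Fin d)),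
        ∀ a b : Fin n, a ≠ b → ∀ i j : Fin d, ‖⟪B a i, B b j⟫‖ ^ 2 = 1 / d) := by
  have hd0 : 0 < d := by omega
  have hD : (0:ℝ) < d := by exact_mod_cast hd0
  have hs : 0 < Real.sqrt d := Real.sqrt_pos.mpr hD
  have hss : Real.sqrt d ^ 2 = d := Real.sq_sqrt hD.le
  have hsplit : ∀ ψ φ : OrthonormalBasis (Fin d) ℂ (EuclideanSpace ℂ (Fin d)),
      (∑ i : Fin d, ∑ j : Fin d, (1 + ‖⟪ψ i, φ j⟫‖))
        = (d:ℝ)^2 + ∑ i : Fin d, ∑ j : Fin d, ‖⟪ψ i, φ j⟫‖ := by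
    intro ψ φ
    simp only [Finset.sum_add_distrib, Finset.sum_const, Finset.card_univ,
      Fintype.card_fin, nsmul_eq_mul, mul_one]
    ring
  have hbound : (1/2 : ℝ) * (1 + 1/Real.sqrt d)
      = (1/(2*(d:ℝ)^2)) * ((d:ℝ)^2 + d * Real.sqrt d) := by
    field_simp
    nlinarith [hss, hs]
  have hVle : ∀ ψ φ : OrthonormalBasis (Fin d) ℂ (EuclideanSpace ℂ (Fin d)),
      (1/(2*(d:ℝ)^2)) * ∑ i : Fin d, ∑ j : Fin d, (1 + ‖⟪ψ i, φ j⟫‖)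
        ≤ (1/2 : ℝ) * (1 + 1/Real.sqrt d) := by
    intro ψ φ
    rw [hsplit, hbound]
    exact mul_le_mul_of_nonneg_left (add_le_add_right (pair_T d hd0 ψ φ).1 _)
      (by positivity)
  have hVeq : ∀ ψ φ : OrthonormalBasis (Fin d) ℂ (EuclideanSpace ℂ (Fin d)),
      ((1/(2*(d:ℝ)^2)) * ∑ i : Fin d, ∑ j : Fin d, (1 + ‖⟪ψ i, φ j⟫‖)
        = (1/2 : ℝ) * (1 + 1/Real.sqrt d)) ↔
      ∀ i j : Fin d, ‖⟪ψ i, φ j⟫‖ ^ 2 = 1 / d := by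
    intro ψ φ
    rw [hsplit, hbound]
    constructor
    · intro h
      have h2 : (d:ℝ)^2 + (∑ i : Fin d, ∑ j : Fin d, ‖⟪ψ i, φ j⟫‖)
          = (d:ℝ)^2 + d * Real.sqrt d :=
        mul_left_cancel₀ (by positivity) h
      exact (pair_T d hd0 ψ φ).2.mp (by linarith)
    · intro h
      rw [(pair_T d hd0 ψ φ).2.mpr h]
  have hcard := card_lt_pairs n
  have hC : (0:ℝ) < (n.choose 2 : ℝ) := by exact_mod_cast Nat.choose_pos hn
  have hble : ∀ B, P B ≤ (1/2 : ℝ) * (1 + 1/Real.sqrt d) := by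
    intro B
    rw [hP B]
    calc (1 / (n.choose 2 : ℝ)) *
        ∑ p ∈ Finset.univ.filter (fun p : Fin n × Fin n => p.1 < p.2),
          (1 / (2 * (d:ℝ) ^ 2)) * ∑ i : Fin d, ∑ j : Fin d, (1 + ‖⟪B p.1 i, B p.2 j⟫‖)
        ≤ (1 / (n.choose 2 : ℝ)) *
        ∑ _p ∈ Finset.univ.filter (fun p : Fin n × Fin n => p.1 < p.2),
          ((1/2 : ℝ) * (1 + 1/Real.sqrt d)) :=
          mul_le_mul_of_nonneg_left
            (Finset.sum_le_sum fun p _ => hVle (B p.1) (B p.2)) (by positivity)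
      _ = (1/2 : ℝ) * (1 + 1/Real.sqrt d) := by
          rw [Finset.sum_const, hcard, nsmul_eq_mul, one_div,
            inv_mul_cancel_left₀ (ne_of_gt hC)]
  refine ⟨hble, ?_, ?_⟩
  · rintro ⟨B, hB⟩
    refine ⟨B, ?_⟩
    rw [hP B, one_div, inv_mul_eq_div, div_eq_iff (ne_of_gt hC)] at hB
    have hsum : ∑ p ∈ Finset.univ.filter (fun p : Fin n × Fin n => p.1 < p.2),
        (1 / (2 * (d:ℝ) ^ 2)) * ∑ i : Fin d, ∑ j : Fin d, (1 + ‖⟪B p.1 i, B p.2 j⟫‖)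
        = ∑ _p ∈ Finset.univ.filter (fun p : Fin n × Fin n => p.1 < p.2),
          ((1/2 : ℝ) * (1 + 1/Real.sqrt d)) := by
      rw [Finset.sum_const, hcard, nsmul_eq_mul, hB, mul_comm]
    have hpt := (Finset.sum_eq_sum_iff_of_le
      (fun p _ => hVle (B p.1) (B p.2))).mp hsum
    have key : ∀ a b : Fin n, a < b → ∀ i j : Fin d,
        ‖⟪B a i, B b j⟫‖ ^ 2 = 1 / d := by
      intro a b hab
      exact (hVeq (B a) (B b)).mp (hpt (a, b) (by simp [hab]))
    intro a b hab i j
    rcases lt_or_gt_of_ne hab with h | h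
    · exact key a b h i j
    · rw [norm_inner_symm]
      exact key b a h j i
  · rintro ⟨B, hB⟩
    refine ⟨B, ?_⟩
    rw [hP B]
    have hpt : ∀ p ∈ Finset.univ.filter (fun p : Fin n × Fin n => p.1 < p.2),
        (1 / (2 * (d:ℝ) ^ 2)) * ∑ i : Fin d, ∑ j : Fin d, (1 + ‖⟪B p.1 i, B p.2 j⟫‖)
        = (1/2 : ℝ) * (1 + 1/Real.sqrt d) := by
      intro p hp
      have hlt : p.1 < p.2 := (Finset.mem_filter.mp hp).2
      exact (hVeq (B p.1) (B p.2)).mpr (fun i j => hB p.1 p.2 (ne_of_lt hlt) i j)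
    rw [Finset.sum_congr rfl hpt, Finset.sum_const, hcard, nsmul_eq_mul, one_div,
      inv_mul_cancel_left₀ (ne_of_gt hC)]
end

section
/- For n orthonormal bases {ψ^1}, ..., {ψ^n} of ℂ^d (d ≥ 2, n ≥ 2), the normalized measure Q̄ = (1/C(n,2)) ∑_{{a,b}} (1/(d(√d − 1))) ∑_{i,j} (|⟨ψ^a_i, ψ^b_j⟩| − 1/d) satisfies 0 ≤ Q̄ ≤ 1; Q̄ = 1 if and only if all pairs of bases are mutually unbiased, and Q̄ = 0 if and only if every pair of bases coincides up to permutation and phases. -/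
open scoped ComplexInnerProductSpace
open Finset

section QbarAux
variable {d : ℕ} (e f : OrthonormalBasis (Fin d) ℂ (EuclideanSpace ℂ (Fin d)))

private lemma qbar_row_sq (i : Fin d) : ∑ j : Fin d, ‖⟪e i, f j⟫‖ ^ 2 = 1 := by
  have h := f.sum_inner_mul_inner (e i) (e i)
  rw [orthonormal_iff_ite.mp e.orthonormal i i] at h
  rw [if_pos rfl] at h
  have h2 : ∀ j : Fin d, ⟪e i, f j⟫ * ⟪f j, e i⟫ = ((‖⟪e i, f j⟫‖ ^ 2 : ℝ) : ℂ) := by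
    intro j
    rw [← inner_conj_symm (f j) (e i), Complex.mul_conj']
    push_cast; ring
  rw [Finset.sum_congr rfl (fun j _ => h2 j)] at h
  exact_mod_cast h

private lemma qbar_col_sq (j : Fin d) : ∑ i : Fin d, ‖⟪e i, f j⟫‖ ^ 2 = 1 := by
  rw [Finset.sum_congr rfl (fun i _ => by rw [norm_inner_symm])]
  exact qbar_row_sq f e j

private lemma qbar_c_le_one (i j : Fin d) : ‖⟪e i, f j⟫‖ ≤ 1 := by
  have h := qbar_row_sq e f i
  have h2 : ‖⟪e i, f j⟫‖ ^ 2 ≤ 1 := by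
    rw [← h]
    exact Finset.single_le_sum (f := fun j => ‖⟪e i, f j⟫‖ ^ 2)
      (fun k _ => by positivity) (mem_univ j)
  nlinarith [norm_nonneg ⟪e i, f j⟫]

private lemma qbar_row_ge (i : Fin d) : 1 ≤ ∑ j : Fin d, ‖⟪e i, f j⟫‖ := by
  rw [← qbar_row_sq e f i]
  apply Finset.sum_le_sum
  intro j _
  nlinarith [norm_nonneg ⟪e i, f j⟫, qbar_c_le_one e f i j]

private lemma qbar_row_expand (hd : 2 ≤ d) (i : Fin d) :
    ∑ j : Fin d, (‖⟪e i, f j⟫‖ - 1 / Real.sqrt d) ^ 2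
      = 2 - (2 / Real.sqrt d) * ∑ j : Fin d, ‖⟪e i, f j⟫‖ := by
  have hd0 : (0:ℝ) < d := by positivity
  have hs : (0:ℝ) < Real.sqrt d := Real.sqrt_pos.mpr hd0
  have hss : Real.sqrt d * Real.sqrt d = d := Real.mul_self_sqrt hd0.le
  have h1 : ∀ j : Fin d, (‖⟪e i, f j⟫‖ - 1 / Real.sqrt d) ^ 2
      = ‖⟪e i, f j⟫‖ ^ 2 - (2 / Real.sqrt d) * ‖⟪e i, f j⟫‖ + 1 / d := by
    intro j
    rw [sub_sq, show ((1:ℝ)/Real.sqrt d)^2 = 1/d from by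
      rw [div_pow, one_pow, Real.sq_sqrt hd0.le]]
    ring
  rw [Finset.sum_congr rfl (fun j _ => h1 j)]
  rw [Finset.sum_add_distrib, Finset.sum_sub_distrib, qbar_row_sq e f i, ← Finset.mul_sum]
  simp only [Finset.sum_const, card_univ, Fintype.card_fin, nsmul_eq_mul]
  field_simp
  ring

private lemma qbar_row_le (hd : 2 ≤ d) (i : Fin d) :
    ∑ j : Fin d, ‖⟪e i, f j⟫‖ ≤ Real.sqrt d := by
  have hs : (0:ℝ) < Real.sqrt d := Real.sqrt_pos.mpr (by positivity)
  have h0 : (0:ℝ) ≤ ∑ j : Fin d, (‖⟪e i, f j⟫‖ - 1 / Real.sqrt d) ^ 2 :=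
    Finset.sum_nonneg (fun j _ => by positivity)
  rw [qbar_row_expand e f hd i] at h0
  have h2 : (2 / Real.sqrt d) * ∑ j : Fin d, ‖⟪e i, f j⟫‖ ≤ 2 := by linarith
  calc ∑ j : Fin d, ‖⟪e i, f j⟫‖
      = (Real.sqrt d / 2) * ((2 / Real.sqrt d) * ∑ j : Fin d, ‖⟪e i, f j⟫‖) := by
        field_simp
    _ ≤ (Real.sqrt d / 2) * 2 := by
        apply mul_le_mul_of_nonneg_left h2 (by positivity)
    _ = Real.sqrt d := by ring

private lemma qbar_S_ge : (d:ℝ) ≤ ∑ i : Fin d, ∑ j : Fin d, ‖⟪e i, f j⟫‖ := by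
  calc (d:ℝ) = ∑ _i : Fin d, (1:ℝ) := by simp
    _ ≤ _ := Finset.sum_le_sum (fun i _ => qbar_row_ge e f i)

private lemma qbar_S_le (hd : 2 ≤ d) :
    ∑ i : Fin d, ∑ j : Fin d, ‖⟪e i, f j⟫‖ ≤ d * Real.sqrt d := by
  calc ∑ i : Fin d, ∑ j : Fin d, ‖⟪e i, f j⟫‖
      ≤ ∑ _i : Fin d, Real.sqrt d := Finset.sum_le_sum (fun i _ => qbar_row_le e f hd i)
    _ = d * Real.sqrt d := by simp [mul_comm]

private lemma qbar_S_eq_upper (hd : 2 ≤ d) :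
    ∑ i : Fin d, ∑ j : Fin d, ‖⟪e i, f j⟫‖ = d * Real.sqrt d ↔
      ∀ i j : Fin d, ‖⟪e i, f j⟫‖ ^ 2 = 1 / d := by
  have hd0 : (0:ℝ) < d := by positivity
  have hs : (0:ℝ) < Real.sqrt d := Real.sqrt_pos.mpr hd0
  have hss : Real.sqrt d * Real.sqrt d = d := Real.mul_self_sqrt hd0.le
  constructor
  · intro hS
    have hrows : ∀ i ∈ (univ : Finset (Fin d)),
        ∑ j : Fin d, ‖⟪e i, f j⟫‖ = Real.sqrt d := by
      apply (Finset.sum_eq_sum_iff_of_le (fun i _ => qbar_row_le e f hd i)).mp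
      rw [hS]; simp [mul_comm]
    intro i j
    have h0 : ∑ j : Fin d, (‖⟪e i, f j⟫‖ - 1 / Real.sqrt d) ^ 2 = 0 := by
      rw [qbar_row_expand e f hd i, hrows i (mem_univ i)]
      field_simp
      norm_num
    have := (Finset.sum_eq_zero_iff_of_nonneg (fun j _ => by positivity)).mp h0 j (mem_univ j)
    have hc : ‖⟪e i, f j⟫‖ = 1 / Real.sqrt d := by
      have := pow_eq_zero_iff (n := 2) (by norm_num) |>.mp this
      linarith [this]
    rw [hc]
    rw [div_pow, one_pow, Real.sq_sqrt hd0.le]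
  · intro h
    have hc : ∀ i j : Fin d, ‖⟪e i, f j⟫‖ = 1 / Real.sqrt d := by
      intro i j
      have h1 : ‖⟪e i, f j⟫‖ = Real.sqrt (1 / d) := by
        rw [← h i j, Real.sqrt_sq (norm_nonneg _)]
      rw [h1, one_div, Real.sqrt_inv, one_div]
    rw [Finset.sum_congr rfl (fun i _ => Finset.sum_congr rfl (fun j _ => hc i j))]
    simp only [Finset.sum_const, card_univ, Fintype.card_fin, nsmul_eq_mul]
    field_simp
    rw [Real.sq_sqrt hd0.le]

private lemma qbar_S_eq_lower :
    ∑ i : Fin d, ∑ j : Fin d, ‖⟪e i, f j⟫‖ = d ↔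
      ∃ σ : Equiv.Perm (Fin d), ∀ i : Fin d, ‖⟪e i, f (σ i)⟫‖ = 1 := by
  constructor
  · intro hS
    have hrows : ∀ i ∈ (univ : Finset (Fin d)),
        (1:ℝ) = ∑ j : Fin d, ‖⟪e i, f j⟫‖ := by
      apply (Finset.sum_eq_sum_iff_of_le (fun i _ => qbar_row_ge e f i)).mp
      rw [hS]; simp
    have hc01 : ∀ i j : Fin d, ‖⟪e i, f j⟫‖ ^ 2 = ‖⟪e i, f j⟫‖ := by
      intro i j
      have h0 : ∑ j : Fin d, (‖⟪e i, f j⟫‖ - ‖⟪e i, f j⟫‖ ^ 2) = 0 := by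
        rw [Finset.sum_sub_distrib, qbar_row_sq e f i, ← hrows i (mem_univ i)]
        ring
      have := (Finset.sum_eq_zero_iff_of_nonneg (fun j _ => by
        nlinarith [norm_nonneg ⟪e i, f j⟫, qbar_c_le_one e f i j])).mp h0 j (mem_univ j)
      linarith
    have hex : ∀ i : Fin d, ∃ j : Fin d, ‖⟪e i, f j⟫‖ = 1 := by
      intro i
      have h1 : ∑ j : Fin d, ‖⟪e i, f j⟫‖ ^ 2 ≠ 0 := by rw [qbar_row_sq e f i]; norm_num
      obtain ⟨j, _, hj⟩ := Finset.exists_ne_zero_of_sum_ne_zero h1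
      refine ⟨j, ?_⟩
      have hne : ‖⟪e i, f j⟫‖ ≠ 0 := fun h => hj (by rw [h]; ring)
      have h2 := hc01 i j
      have h3 : ‖⟪e i, f j⟫‖ * (‖⟪e i, f j⟫‖ - 1) = 0 := by nlinarith
      rcases mul_eq_zero.mp h3 with h | h
      · exact absurd h hne
      · linarith
    choose g hg using hex
    have hinj : Function.Injective g := by
      intro i i' hii'
      by_contra hne
      have hcol := qbar_col_sq e f (g i)
      have hpair : ∑ k ∈ ({i, i'} : Finset (Fin d)), ‖⟪e k, f (g i)⟫‖ ^ 2 = 2 := by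
        rw [Finset.sum_pair hne, hg i, hii', hg i']
        norm_num
      have := Finset.sum_le_sum_of_subset_of_nonneg (Finset.subset_univ ({i, i'} : Finset (Fin d)))
        (f := fun k => ‖⟪e k, f (g i)⟫‖ ^ 2) (fun k _ _ => by positivity)
      rw [hpair, hcol] at this
      linarith
    exact ⟨Equiv.ofBijective g (Finite.injective_iff_bijective.mp hinj), fun i => hg i⟩
  · intro ⟨σ, hσ⟩
    have hrow : ∀ i : Fin d, ∑ j : Fin d, ‖⟪e i, f j⟫‖ = 1 := by
      intro i
      have h := qbar_row_sq e f i
      rw [← Finset.add_sum_erase univ _ (mem_univ (σ i)), hσ i] at h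
      have h0 : ∑ j ∈ univ.erase (σ i), ‖⟪e i, f j⟫‖ ^ 2 = 0 := by linarith [h]
      have hz : ∀ j ∈ univ.erase (σ i), ‖⟪e i, f j⟫‖ = 0 := by
        intro j hj
        have := (Finset.sum_eq_zero_iff_of_nonneg (fun j _ => by positivity)).mp h0 j hj
        exact pow_eq_zero_iff (n := 2) (by norm_num) |>.mp this
      rw [← Finset.add_sum_erase univ _ (mem_univ (σ i)), hσ i,
        Finset.sum_eq_zero hz]
      norm_num
    rw [Finset.sum_congr rfl (fun i _ => hrow i)]
    simp

end QbarAux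

private lemma qbar_card_lt_pairs (n : ℕ) :
    ((univ : Finset (Fin n × Fin n)).filter fun p => p.1 < p.2).card = n.choose 2 := by
  rw [Finset.card_filter, Fintype.sum_prod_type_right]
  have h : ∀ b : Fin n, (∑ a : Fin n, if a < b then 1 else 0) = (b : ℕ) := by
    intro b
    rw [← Finset.card_filter]
    have : (univ.filter fun a : Fin n => a < b) = Finset.Iio b := by
      ext a; simp
    rw [this, Fin.card_Iio]
  rw [Finset.sum_congr rfl (fun b _ => h b)]
  rw [Fin.sum_univ_eq_sum_range (fun i => i) n, Finset.sum_range_id, Nat.choose_two_right]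

open scoped ComplexInnerProductSpace in
theorem unbiasedness_measure_Qbar (n d : ℕ) (hn : 2 ≤ n) (hd : 2 ≤ d)
    (B : Fin n → OrthonormalBasis (Fin d) ℂ (EuclideanSpace ℂ (Fin d)))
    (Q : ℝ)
    (hQ : Q = (1 / (n.choose 2 : ℝ)) *
      ∑ p ∈ Finset.univ.filter (fun p : Fin n × Fin n => p.1 < p.2),
        (1 / (d * (Real.sqrt d - 1))) *
          ∑ i : Fin d, ∑ j : Fin d, (‖⟪B p.1 i, B p.2 j⟫‖ - 1 / d)) :
    (0 ≤ Q) ∧ (Q ≤ 1) ∧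
    (Q = 1 ↔ ∀ a b : Fin n, a ≠ b → ∀ i j : Fin d, ‖⟪B a i, B b j⟫‖ ^ 2 = 1 / d) ∧
    (Q = 0 ↔ ∀ a b : Fin n, a ≠ b →
      ∃ σ : Equiv.Perm (Fin d), ∀ i : Fin d, ‖⟪B a i, B b (σ i)⟫‖ = 1) := by
  have hd0 : (0:ℝ) < d := by positivity
  have hs1 : 1 < Real.sqrt d := by
    rw [show (1:ℝ) = Real.sqrt 1 from Real.sqrt_one.symm]
    exact Real.sqrt_lt_sqrt zero_le_one (by exact_mod_cast (by omega : 1 < d))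
  have hk : (0:ℝ) < d * (Real.sqrt d - 1) := mul_pos hd0 (by linarith)
  set P := Finset.univ.filter (fun p : Fin n × Fin n => p.1 < p.2) with hP
  set T : Fin n × Fin n → ℝ := fun p => (1 / (d * (Real.sqrt d - 1))) *
      ∑ i : Fin d, ∑ j : Fin d, (‖⟪B p.1 i, B p.2 j⟫‖ - 1 / d) with hT
  set S : Fin n → Fin n → ℝ := fun a b => ∑ i : Fin d, ∑ j : Fin d, ‖⟪B a i, B b j⟫‖ with hS
  have hsum : ∀ a b : Fin n,
      ∑ i : Fin d, ∑ j : Fin d, (‖⟪B a i, B b j⟫‖ - 1 / d) = S a b - d := by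
    intro a b
    rw [Finset.sum_congr rfl (fun i (_ : i ∈ univ) => Finset.sum_sub_distrib _ _),
      Finset.sum_sub_distrib]
    simp only [Finset.sum_const, card_univ, Fintype.card_fin, nsmul_eq_mul]
    rw [hS]
    field_simp
  have hTval : ∀ p : Fin n × Fin n, T p = (1 / (d * (Real.sqrt d - 1))) * (S p.1 p.2 - d) := by
    intro p; rw [hT]; simp only []; rw [hsum]
  have hT0 : ∀ p : Fin n × Fin n, 0 ≤ T p := by
    intro p
    rw [hTval]
    apply mul_nonneg (by positivity)
    linarith [qbar_S_ge (B p.1) (B p.2)]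
  have hT1 : ∀ p : Fin n × Fin n, T p ≤ 1 := by
    intro p
    rw [hTval, one_div, inv_mul_le_iff₀ hk, mul_one]
    have h1 : S p.1 p.2 ≤ d * Real.sqrt d := qbar_S_le (B p.1) (B p.2) hd
    nlinarith
  have hTeq1 : ∀ p : Fin n × Fin n,
      (T p = 1 ↔ ∀ i j : Fin d, ‖⟪B p.1 i, B p.2 j⟫‖ ^ 2 = 1 / d) := by
    intro p
    rw [hTval, one_div, inv_mul_eq_div, div_eq_one_iff_eq hk.ne']
    rw [← qbar_S_eq_upper (B p.1) (B p.2) hd]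
    constructor <;> intro h <;> nlinarith
  have hTeq0 : ∀ p : Fin n × Fin n,
      (T p = 0 ↔ ∃ σ : Equiv.Perm (Fin d), ∀ i : Fin d, ‖⟪B p.1 i, B p.2 (σ i)⟫‖ = 1) := by
    intro p
    rw [hTval, mul_eq_zero, or_iff_right (by positivity : (1:ℝ)/(d*(Real.sqrt d -1)) ≠ 0),
      sub_eq_zero]
    exact qbar_S_eq_lower (B p.1) (B p.2)
  have hNpos : (0:ℝ) < (n.choose 2 : ℝ) := by
    exact_mod_cast Nat.choose_pos hn
  have hcard : (P.card : ℝ) = (n.choose 2 : ℝ) := by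
    exact_mod_cast congrArg Nat.cast (qbar_card_lt_pairs n)
  have hQs : Q = (∑ p ∈ P, T p) / (n.choose 2 : ℝ) := by
    rw [hQ, one_div, inv_mul_eq_div]
  have hsum_le : ∑ p ∈ P, T p ≤ (n.choose 2 : ℝ) := by
    calc ∑ p ∈ P, T p ≤ ∑ _p ∈ P, (1:ℝ) := Finset.sum_le_sum (fun p _ => hT1 p)
      _ = (P.card : ℝ) := by simp
      _ = _ := hcard
  refine ⟨?_, ?_, ?_, ?_⟩
  · rw [hQs]
    exact div_nonneg (Finset.sum_nonneg (fun p _ => hT0 p)) hNpos.le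
  · rw [hQs, div_le_one hNpos]
    exact hsum_le
  · rw [hQs, div_eq_one_iff_eq hNpos.ne']
    have hiff : (∑ p ∈ P, T p = (n.choose 2 : ℝ)) ↔ ∀ p ∈ P, T p = 1 := by
      rw [← hcard]
      constructor
      · intro h
        apply (Finset.sum_eq_sum_iff_of_le (fun p _ => hT1 p)).mp
        rw [h]; simp
      · intro h
        rw [Finset.sum_congr rfl h]; simp
    rw [hiff]
    constructor
    · intro h a b hab i j
      rcases lt_or_gt_of_ne hab with hlt | hgt
      · exact (hTeq1 (a, b)).mp (h (a, b) (Finset.mem_filter.mpr ⟨mem_univ _, hlt⟩)) i j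
      · have := (hTeq1 (b, a)).mp (h (b, a) (Finset.mem_filter.mpr ⟨mem_univ _, hgt⟩)) j i
        rwa [norm_inner_symm] at this
    · intro h p hp
      exact (hTeq1 p).mpr (h p.1 p.2 (Finset.mem_filter.mp hp).2.ne)
  · rw [hQs, div_eq_zero_iff, or_iff_left hNpos.ne']
    have hiff : (∑ p ∈ P, T p = 0) ↔ ∀ p ∈ P, T p = 0 :=
      Finset.sum_eq_zero_iff_of_nonneg (fun p _ => hT0 p)
    rw [hiff]
    constructor
    · intro h a b hab
      rcases lt_or_gt_of_ne hab with hlt | hgt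
      · exact (hTeq0 (a, b)).mp (h (a, b) (Finset.mem_filter.mpr ⟨mem_univ _, hlt⟩))
      · obtain ⟨σ, hσ⟩ := (hTeq0 (b, a)).mp (h (b, a) (Finset.mem_filter.mpr ⟨mem_univ _, hgt⟩))
        refine ⟨σ.symm, fun i => ?_⟩
        rw [norm_inner_symm]
        have := hσ (σ.symm i)
        rwa [Equiv.apply_symm_apply] at this
    · intro h p hp
      exact (hTeq0 p).mpr (h p.1 p.2 (Finset.mem_filter.mp hp).2.ne)
end

section
/- Let {ψ_i}, {φ_j} be orthonormal bases of ℂ^d with d ≥ 2, and suppose the average success probability (1/(2d²)) ∑_{i,j} (1 + |⟨ψ_i, φ_j⟩|) equals (1/2)(1 + 1/√d). Then for every pair (i,j), the largest eigenvalue of |ψ_i⟩⟨ψ_i| + |φ_j⟩⟨φ_j| equals 1 + 1/√d. -/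
open Matrix

lemma vecMulVec_mulVec' {d : ℕ} (u v : Fin d → ℂ) :
    (Matrix.vecMulVec u (star u)).mulVec v = (star u ⬝ᵥ v) • u := by
  funext k
  simp [Matrix.mulVec, Matrix.vecMulVec_apply, dotProduct, Finset.mul_sum,
    mul_comm, mul_assoc, mul_left_comm]

lemma eig_lemma {d : ℕ} (c : ℝ) (hc : 0 < c) (u w : Fin d → ℂ)
    (huu : star u ⬝ᵥ u = 1) (hww : star w ⬝ᵥ w = 1) (hg : ‖star u ⬝ᵥ w‖ = c) :
    IsGreatest {μ : ℝ | ∃ v : Fin d → ℂ, v ≠ 0 ∧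
      (Matrix.vecMulVec u (star u) + Matrix.vecMulVec w (star w)).mulVec v = (μ : ℂ) • v}
      (1 + c) := by
  set g : ℂ := star u ⬝ᵥ w with hgdef
  have hwu : star w ⬝ᵥ u = starRingEnd ℂ g := by
    simp only [hgdef, dotProduct, map_sum]
    refine Finset.sum_congr rfl fun k _ => ?_
    simp [Pi.star_apply, mul_comm]
  have hMv : ∀ v : Fin d → ℂ,
      (Matrix.vecMulVec u (star u) + Matrix.vecMulVec w (star w)).mulVec v
        = (star u ⬝ᵥ v) • u + (star w ⬝ᵥ v) • w := by
    intro v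
    rw [Matrix.add_mulVec, vecMulVec_mulVec', vecMulVec_mulVec']
  have hgg : g * starRingEnd ℂ g = ((c^2 : ℝ) : ℂ) := by
    rw [Complex.mul_conj', ← hg]
    norm_cast
  constructor
  · -- membership: v = c • u + conj g • w
    refine ⟨(c : ℂ) • u + (starRingEnd ℂ g) • w, ?_, ?_⟩
    · intro h0
      have : star u ⬝ᵥ ((c : ℂ) • u + (starRingEnd ℂ g) • w) = 0 := by rw [h0]; simp
      rw [dotProduct_add, dotProduct_smul, dotProduct_smul, huu,
        ← hgdef] at this
      simp only [smul_eq_mul, mul_one] at this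
      rw [mul_comm, hgg] at this
      have : (c : ℂ) + (c^2 : ℝ) = 0 := this
      have hre : c + c^2 = 0 := by exact_mod_cast this
      nlinarith
    · rw [hMv, dotProduct_add, dotProduct_add,
        dotProduct_smul, dotProduct_smul, dotProduct_smul,
        dotProduct_smul, huu, hww, ← hgdef, hwu]
      simp only [smul_eq_mul, mul_one]
      rw [mul_comm (starRingEnd ℂ g) g, hgg]
      rw [smul_add, smul_smul, smul_smul]
      push_cast
      ring_nf
  · -- upper bound
    rintro μ ⟨v, hv0, hv⟩
    rw [hMv] at hv
    set a : ℂ := star u ⬝ᵥ v with ha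
    set b : ℂ := star w ⬝ᵥ v with hb
    have h1 : (μ : ℂ) * a = a + b * g := by
      have := congrArg (fun x => star u ⬝ᵥ x) hv
      simpa [dotProduct_add, dotProduct_smul, huu, ← hgdef, ← ha,
        mul_comm] using this.symm
    have h2 : (μ : ℂ) * b = a * starRingEnd ℂ g + b := by
      have := congrArg (fun x => star w ⬝ᵥ x) hv
      simpa [dotProduct_add, dotProduct_smul, hww, hwu, ← hb,
        mul_comm] using this.symm
    by_cases hab : a = 0 ∧ b = 0
    · -- then μ • v = 0, so μ = 0
      obtain ⟨ha0, hb0⟩ := hab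
      rw [ha0, hb0] at hv
      simp only [zero_smul, add_zero] at hv
      have hz : (μ : ℂ) • v = 0 := hv.symm
      rcases smul_eq_zero.mp hz with h | h
      · have : μ = 0 := by exact_mod_cast h
        linarith
      · exact absurd h hv0
    · have key : ((μ : ℂ) - 1)^2 = ((c^2 : ℝ) : ℂ) := by
        have e1 : ((μ:ℂ) - 1) * a = b * g := by linear_combination h1
        have e2 : ((μ:ℂ) - 1) * b = a * starRingEnd ℂ g := by linear_combination h2
        rcases (not_and_or.mp hab) with h | h
        · have : ((μ:ℂ) - 1)^2 * a = (g * starRingEnd ℂ g) * a := by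
            calc ((μ:ℂ) - 1)^2 * a = ((μ:ℂ)-1) * (((μ:ℂ)-1) * a) := by ring
            _ = ((μ:ℂ)-1) * (b * g) := by rw [e1]
            _ = (((μ:ℂ)-1) * b) * g := by ring
            _ = (a * starRingEnd ℂ g) * g := by rw [e2]
            _ = (g * starRingEnd ℂ g) * a := by ring
          rw [hgg] at this
          exact mul_right_cancel₀ h this
        · have : ((μ:ℂ) - 1)^2 * b = (g * starRingEnd ℂ g) * b := by
            calc ((μ:ℂ) - 1)^2 * b = ((μ:ℂ)-1) * (((μ:ℂ)-1) * b) := by ring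
            _ = ((μ:ℂ)-1) * (a * starRingEnd ℂ g) := by rw [e2]
            _ = (((μ:ℂ)-1) * a) * starRingEnd ℂ g := by ring
            _ = (b * g) * starRingEnd ℂ g := by rw [e1]
            _ = (g * starRingEnd ℂ g) * b := by ring
          rw [hgg] at this
          exact mul_right_cancel₀ h this
      have keyr : (μ - 1)^2 = c^2 := by
        have : (((μ - 1)^2 : ℝ) : ℂ) = ((c^2 : ℝ) : ℂ) := by push_cast; push_cast at key; linear_combination key
        exact_mod_cast this
      nlinarith

open scoped ComplexInnerProductSpace in
theorem equality_forces_lambda_max (d : ℕ) (hd : 2 ≤ d)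
    (ψ φ : OrthonormalBasis (Fin d) ℂ (EuclideanSpace ℂ (Fin d)))
    (heq : (1 / (2 * d ^ 2 : ℝ)) * (∑ i : Fin d, ∑ j : Fin d, (1 + ‖⟪ψ i, φ j⟫‖)) =
      (1 / 2) * (1 + 1 / Real.sqrt d)) :
    ∀ i j : Fin d,
      IsGreatest {μ : ℝ | ∃ v : Fin d → ℂ, v ≠ 0 ∧
          (Matrix.vecMulVec (fun k => ψ i k) (star fun k => ψ i k) +
            Matrix.vecMulVec (fun k => φ j k) (star fun k => φ j k)).mulVec v = (μ : ℂ) • v}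
        (1 + 1 / Real.sqrt d) := by
  have hd0 : (0 : ℝ) < d := by exact_mod_cast Nat.lt_of_lt_of_le two_pos hd |>.trans_le le_rfl
  have hs0 : (0 : ℝ) < Real.sqrt d := Real.sqrt_pos.mpr hd0
  have hss : Real.sqrt d * Real.sqrt d = d := Real.mul_self_sqrt hd0.le
  set x : Fin d → Fin d → ℝ := fun i j => ‖⟪ψ i, φ j⟫‖ with hx
  -- Parseval
  have hpar : ∀ i, ∑ j, x i j ^ 2 = 1 := by
    intro i
    have h := φ.sum_inner_mul_inner (ψ i) (ψ i)
    have hterm : ∀ j, ⟪ψ i, φ j⟫ * ⟪φ j, ψ i⟫ = ((x i j ^ 2 : ℝ) : ℂ) := by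
      intro j
      rw [← inner_conj_symm (φ j) (ψ i), Complex.mul_conj']
      norm_cast
    rw [Finset.sum_congr rfl (fun j _ => hterm j)] at h
    have hns : ⟪ψ i, ψ i⟫ = (1 : ℂ) := by
      have := ψ.orthonormal.1 i
      rw [inner_self_eq_norm_sq_to_K, this]
      norm_num
    rw [hns, ← Complex.ofReal_sum] at h
    exact_mod_cast h
  -- Cauchy–Schwarz per row
  have hCS : ∀ i, ∑ j, x i j ≤ Real.sqrt d := by
    intro i
    have h := Finset.sum_mul_sq_le_sq_mul_sq Finset.univ (fun _ => (1:ℝ)) (x i)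
    simp only [one_mul, one_pow, Finset.sum_const, Finset.card_univ, Fintype.card_fin,
      nsmul_eq_mul, mul_one] at h
    rw [hpar i, mul_one] at h
    have hnn : 0 ≤ ∑ j, x i j := Finset.sum_nonneg fun j _ => norm_nonneg _
    nlinarith [Real.sq_sqrt hd0.le, Real.sqrt_nonneg (d:ℝ)]
  -- total sum
  have hS : ∑ i, ∑ j, x i j = d * Real.sqrt d := by
    have hexp : (∑ i : Fin d, ∑ j : Fin d, (1 + x i j))
        = d * d + ∑ i, ∑ j, x i j := by
      simp only [Finset.sum_add_distrib, Finset.sum_const, Finset.card_univ,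
        Fintype.card_fin, nsmul_eq_mul, mul_one]
      try push_cast
      try ring
    rw [hexp] at heq
    have h2 : (2 * (d:ℝ)^2) ≠ 0 := by positivity
    field_simp at heq
    nlinarith [heq, hss]
  -- each row sum is √d
  have hrow : ∀ i, ∑ j, x i j = Real.sqrt d := by
    intro i
    by_contra hne
    have hlt : ∑ j, x i j < Real.sqrt d := lt_of_le_of_ne (hCS i) hne
    have : ∑ i, ∑ j, x i j < ∑ _i : Fin d, Real.sqrt d :=
      Finset.sum_lt_sum (fun k _ => hCS k) ⟨i, Finset.mem_univ i, hlt⟩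
    rw [hS] at this
    simp [Finset.card_univ, mul_comm] at this
  -- each entry is 1/√d
  have hxval : ∀ i j, x i j = 1 / Real.sqrt d := by
    intro i j
    have hzero : ∑ j, (x i j - 1 / Real.sqrt d) ^ 2 = 0 := by
      have expand : ∑ j, (x i j - 1 / Real.sqrt d) ^ 2
          = (∑ j, x i j ^ 2) - 2 * (1 / Real.sqrt d) * (∑ j, x i j)
            + d * (1 / Real.sqrt d) ^ 2 := by
        simp only [sub_sq, Finset.sum_add_distrib, Finset.sum_sub_distrib,
          Finset.sum_const, Finset.card_univ, Fintype.card_fin, nsmul_eq_mul,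
          ← Finset.sum_mul]
        rw [← Finset.mul_sum]
        ring
      rw [expand, hpar i, hrow i]
      field_simp
      nlinarith [hss]
    have := (Finset.sum_eq_zero_iff_of_nonneg (fun j _ => sq_nonneg _)).mp hzero j
      (Finset.mem_univ j)
    have := pow_eq_zero_iff (n := 2) (by norm_num) |>.mp this
    linarith [this]
  intro i j
  have hcpos : (0:ℝ) < 1 / Real.sqrt d := by positivity
  refine eig_lemma (1 / Real.sqrt d) hcpos (fun k => ψ i k) (fun k => φ j k) ?_ ?_ ?_
  · have hns : ⟪ψ i, ψ i⟫ = (1 : ℂ) := by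
      rw [inner_self_eq_norm_sq_to_K, ψ.orthonormal.1 i]; norm_num
    rw [← hns]
    simp only [dotProduct, PiLp.inner_apply, Pi.star_apply, RCLike.star_def, RCLike.inner_apply]
    exact Finset.sum_congr rfl fun _ _ => mul_comm _ _
  · have hns : ⟪φ j, φ j⟫ = (1 : ℂ) := by
      rw [inner_self_eq_norm_sq_to_K, φ.orthonormal.1 j]; norm_num
    rw [← hns]
    simp only [dotProduct, PiLp.inner_apply, Pi.star_apply, RCLike.star_def, RCLike.inner_apply]
    exact Finset.sum_congr rfl fun _ _ => mul_comm _ _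
  · have : (star fun k => ψ i k) ⬝ᵥ (fun k => φ j k) = ⟪ψ i, φ j⟫ := by
      simp [dotProduct, PiLp.inner_apply]
      exact Finset.sum_congr rfl fun _ _ => mul_comm _ _
    rw [this]
    exact hxval i j
end
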